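/- Let G be a locally compact group, μ a probability measure on G, and suppose there exists a sequence (or net) such that ‖f ∗ μⁿ − f(1)μⁿ‖ → 0 in L¹-type norm for all f in a dense subset D of the normal states, where f(1) denotes the total mass of f. Then every bounded μ-harmonic element x (i.e., fixed point of the dual Markov operator) is a scalar: for all f, g normal states, ⟨f, x⟩ = ⟨g, x⟩. -/

import Mathlib

open Filter NormedSpace

/-- Abstract Kaimanovich–Vershik argument: let `A` be a Banach (convolution) algebra of
normal functionals, `S ⊆ A` the set of normal states (norm one, total mass `one f = 1`,
where `one ∈ A*` is the unit of the dual), `D ⊆ S` a dense subset of the states, and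
`μ ∈ S` a state whose convolution powers `μⁿ ∈ S` satisfy
`‖f ∗ μⁿ − f(1)·μⁿ‖ → 0` for every `f ∈ D`.  Then every bounded `μ`-harmonic element
`x ∈ A*` (i.e. `x(f ∗ μ) = x(f)` for all `f`) is a scalar: `⟨f, x⟩ = ⟨g, x⟩` for all
normal states `f, g ∈ S`. -/
theorem harmonic_trivial_of_asymptotic_invariance
    {A : Type*} [NonUnitalNormedRing A] [NormedSpace ℂ A]
    [IsScalarTower ℂ A A] [SMulCommClass ℂ A A]
    (one : StrongDual ℂ A)                     -- the unit 1 ∈ M = A*, ⟨f, 1⟩ = f(1)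
    (S : Set A)                          -- the normal states
    (hS : ∀ f ∈ S, ‖f‖ = 1 ∧ one f = 1)
    (D : Set A) (hD_sub : D ⊆ S) (hD_dense : S ⊆ closure D)  -- D dense in the states
    (μ : A) (hμ : μ ∈ S)
    (pw : ℕ → A) (hpw1 : pw 1 = μ) (hpwS : ∀ n, 1 ≤ n → pw n ∈ S)
    (hpw : ∀ n, pw (n + 1) = pw n * μ)
    (hinv : ∀ f ∈ D, Tendsto (fun n : ℕ => ‖f * pw n - one f • pw n‖) atTop (nhds 0))
    (x : StrongDual ℂ A)
    (hx_harmonic : ∀ f : A, x (f * μ) = x f) :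
    ∀ f ∈ S, ∀ g ∈ S, x f = x g := by
  have hxpw : ∀ n, 1 ≤ n → x (pw n) = x μ := by
    intro n hn
    induction n with
    | zero => omega
    | succ k ih =>
      cases k with
      | zero => simp [hpw1]
      | succ m => rw [hpw, hx_harmonic, ih (by omega)]
  have hxmul : ∀ n, 1 ≤ n → ∀ f : A, x (f * pw n) = x f := by
    intro n hn
    induction n with
    | zero => omega
    | succ k ih =>
      cases k with
      | zero => intro f; rw [hpw1, hx_harmonic]
      | succ m =>
        intro f
        rw [hpw, ← mul_assoc, hx_harmonic, ih (by omega)]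
  have hDx : ∀ f ∈ D, x f = x μ := by
    intro f hf
    have h1 : Tendsto (fun n => x (f * pw n - one f • pw n)) atTop (nhds 0) := by
      rw [tendsto_zero_iff_norm_tendsto_zero]
      apply squeeze_zero (fun n => norm_nonneg _)
        (fun n => x.le_opNorm _)
      simpa using (hinv f hf).const_mul ‖x‖
    have h2 : (fun n : ℕ => x (f * pw n - one f • pw n)) =ᶠ[atTop]
        (fun _ : ℕ => x f - one f * x μ) := by
      filter_upwards [eventually_ge_atTop 1] with n hn
      rw [map_sub, map_smul, hxmul n hn, hxpw n hn, smul_eq_mul]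
    have h3 : Tendsto (fun _ : ℕ => x f - one f * x μ) atTop (nhds 0) :=
      h1.congr' h2
    have h4 : x f - one f * x μ = 0 := tendsto_nhds_unique tendsto_const_nhds h3
    have h5 : one f = 1 := (hS f (hD_sub hf)).2
    rw [h5, one_mul] at h4
    exact sub_eq_zero.mp h4
  have hSx : ∀ f ∈ S, x f = x μ := by
    intro f hf
    have hclosed : IsClosed {g : A | x g = x μ} := isClosed_eq x.continuous continuous_const
    exact closure_minimal (fun g hg => hDx g hg) hclosed (hD_dense hf)
  intro f hf g hg
  rw [hSx f hf, hSx g hg]
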